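/- arXiv:1106.4229 — 2 statements merged into one kernel-verified Lean document; each statement's English description precedes it below -/
import Mathlib

section
/- Let $1 < p < \infty$ and let $h(x) = e^{\rho \cdot x}$ where $\rho = \alpha + i\beta$ with $\alpha, \beta \in \mathbb{R}^n$ not both zero. Then $h$ satisfies the complex $p$-Laplace equation $\mathrm{div}(|\nabla h|^{p-2} \nabla h) = 0$ on $\mathbb{R}^n$ if and only if $(p-1)|\alpha|^2 = |\beta|^2$ and $\alpha \cdot \beta = 0$. -/
open Complex

/-- The complex exponential `h(x) = e^{ρ·x}`, `ρ = α + iβ` (with `α, β` not both zero),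
is `p`-harmonic, i.e. `div(|∇h|^{p-2}∇h) = 0` on `ℝⁿ` (divergence computed
componentwise for the `ℂⁿ`-valued field `|∇h|^{p-2}∇h`, where `∇h(x) = ρ e^{ρ·x}` and
`|z| = (|Re z|² + |Im z|²)^{1/2}`), if and only if `(p-1)|α|² = |β|²` and `α·β = 0`. -/
theorem pHarmonic_complex_exponential (n : ℕ) (p : ℝ) (hp : 1 < p)
    (α β : EuclideanSpace ℝ (Fin n)) (hαβ : (α, β) ≠ 0)
    (h : EuclideanSpace ℝ (Fin n) → ℂ)
    (hh : ∀ x, h x = Complex.exp (∑ i, (α i + β i * I) * x i))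
    (gradh : EuclideanSpace ℝ (Fin n) → EuclideanSpace ℂ (Fin n))
    (hgrad : ∀ x i, gradh x i = (α i + β i * I) * h x) :
    (∀ x : EuclideanSpace ℝ (Fin n), ∑ i,
        fderiv ℝ (fun y => (‖gradh y‖ ^ (p - 2) : ℝ) • gradh y i) x
          (EuclideanSpace.single i 1) = 0)
      ↔ ((p - 1) * ‖α‖ ^ 2 = ‖β‖ ^ 2 ∧ inner ℝ α β = (0 : ℝ)) := by
  classical
  set ρ : Fin n → ℂ := fun i => (α i : ℂ) + β i * I with hρdef
  set σ : Fin n → ℂ := fun i => (((p - 1) * α i : ℝ) : ℂ) + (β i : ℂ) * I with hσdef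
  set A : EuclideanSpace ℝ (Fin n) → ℝ := fun y => ∑ j, α j * y j with hAdef
  set R : ℝ := Real.sqrt (∑ i, ‖ρ i‖ ^ 2) with hRdef
  -- some ρ i is nonzero
  have hρ0 : ∃ i, ρ i ≠ 0 := by
    by_contra hc
    push_neg at hc
    apply hαβ
    have hre : ∀ i, α i = 0 ∧ β i = 0 := by
      intro i
      have := hc i
      simpa [hρdef, Complex.ext_iff] using this
    have hα : α = 0 := by ext i; exact (hre i).1
    have hβ : β = 0 := by ext i; exact (hre i).2
    simp [hα, hβ, Prod.ext_iff]
  have hRpos : 0 < R := by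
    obtain ⟨i, hi⟩ := hρ0
    apply Real.sqrt_pos.mpr
    apply Finset.sum_pos' (fun j _ => by positivity)
    exact ⟨i, Finset.mem_univ i, pow_pos (norm_pos_iff.mpr hi) 2⟩
  -- norm of the gradient
  have habs : ∀ y, ‖h y‖ = Real.exp (A y) := by
    intro y
    rw [hh, Complex.norm_exp]
    congr 1
    rw [Complex.re_sum]
    apply Finset.sum_congr rfl
    intro j _
    simp
  have hnorm : ∀ y, ‖gradh y‖ = Real.exp (A y) * R := by
    intro y
    rw [EuclideanSpace.norm_eq]
    have : ∀ i : Fin n, ‖gradh y i‖ ^ 2 = Real.exp (A y) ^ 2 * ‖ρ i‖ ^ 2 := by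
      intro i
      rw [hgrad]
      simp only [norm_mul]
      rw [habs]
      ring
    rw [Finset.sum_congr rfl fun i _ => this i, ← Finset.mul_sum,
      Real.sqrt_mul (sq_nonneg _), Real.sqrt_sq (Real.exp_pos _).le]
  have hpow : ∀ y, (‖gradh y‖ : ℝ) ^ (p - 2) = Real.exp ((p - 2) * A y) * R ^ (p - 2) := by
    intro y
    rw [hnorm, Real.mul_rpow (Real.exp_pos _).le hRpos.le]
    congr 1
    rw [Real.rpow_def_of_pos (Real.exp_pos _), Real.log_exp]
    ring_nf
  -- the linear map y ↦ ∑ σ j y j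
  set Lmap : EuclideanSpace ℝ (Fin n) →L[ℝ] ℂ :=
    ∑ j, σ j • (Complex.ofRealCLM.comp (EuclideanSpace.proj j)) with hLdef
  have hL : ∀ y, Lmap y = ∑ j, σ j * (y j : ℂ) := by
    intro y
    rw [hLdef]
    simp [ContinuousLinearMap.sum_apply, smul_eq_mul]
  have hLsingle : ∀ i, Lmap (EuclideanSpace.single i 1) = σ i := by
    intro i
    rw [hL, Finset.sum_eq_single i]
    · simp [EuclideanSpace.single_apply]
    · intro j _ hj
      simp [EuclideanSpace.single_apply, hj]
    · intro hi
      exact absurd (Finset.mem_univ i) hi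
  -- the field component is a multiple of exp(Lmap y)
  have hfun : ∀ i : Fin n, (fun y => (‖gradh y‖ ^ (p - 2) : ℝ) • gradh y i)
      = fun y => ((R ^ (p - 2) : ℝ) : ℂ) * ρ i * Complex.exp (Lmap y) := by
    intro i
    funext y
    rw [hpow, hgrad, hh, real_smul]
    have hexp : Complex.exp (((p - 2) * A y : ℝ) : ℂ) * Complex.exp (∑ j, ρ j * (y j : ℂ))
        = Complex.exp (∑ j, σ j * (y j : ℂ)) := by
      rw [← Complex.exp_add]
      congr 1
      have : (((p - 2) * A y : ℝ) : ℂ) = ∑ j, (((p - 2) * α j : ℝ) : ℂ) * (y j : ℂ) := by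
        push_cast [hAdef, Finset.mul_sum]
        apply Finset.sum_congr rfl
        intro j _
        ring
      rw [this, ← Finset.sum_add_distrib]
      apply Finset.sum_congr rfl
      intro j _
      have : σ j = (((p - 2) * α j : ℝ) : ℂ) + ρ j := by
        rw [hσdef, hρdef]
        push_cast
        ring
      rw [this]
      ring
    rw [Complex.ofReal_mul, Complex.ofReal_exp, hL, ← hexp]
    simp only [hρdef]
    ring
  -- the divergence formula
  have hderiv : ∀ x i, fderiv ℝ (fun y => (‖gradh y‖ ^ (p - 2) : ℝ) • gradh y i) x
      (EuclideanSpace.single i 1)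
      = ((R ^ (p - 2) : ℝ) : ℂ) * ρ i * (Complex.exp (Lmap x) * σ i) := by
    intro x i
    rw [hfun i]
    have hF : HasFDerivAt (fun y => ((R ^ (p - 2) : ℝ) : ℂ) * ρ i * Complex.exp (Lmap y))
        ((((R ^ (p - 2) : ℝ) : ℂ) * ρ i) • (Complex.exp (Lmap x) • Lmap)) x :=
      (Lmap.hasFDerivAt.cexp).const_mul _
    rw [hF.fderiv]
    simp [hLsingle, smul_eq_mul]
  set S : ℂ := (((p - 1) * ‖α‖ ^ 2 - ‖β‖ ^ 2 : ℝ) : ℂ) + ((p * (inner ℝ α β : ℝ) : ℝ) : ℂ) * I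
    with hSdef
  have hsumρσ : ∑ i, ρ i * σ i = S := by
    have hα2 : ‖α‖ ^ 2 = ∑ i, α i * α i := by
      rw [← real_inner_self_eq_norm_sq, PiLp.inner_apply]
      simp [RCLike.inner_apply]
      simp only [sq]
    have hβ2 : ‖β‖ ^ 2 = ∑ i, β i * β i := by
      rw [← real_inner_self_eq_norm_sq, PiLp.inner_apply]
      simp [RCLike.inner_apply]
      simp only [sq]
    have hab : (inner ℝ α β : ℝ) = ∑ i, α i * β i := by
      rw [PiLp.inner_apply]
      simp [RCLike.inner_apply, mul_comm]
    have hterm : ∀ i, ρ i * σ i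
        = (((p - 1) * (α i * α i) - β i * β i : ℝ) : ℂ) + ((p * (α i * β i) : ℝ) : ℂ) * I := by
      intro i
      rw [hρdef, hσdef]
      apply Complex.ext <;> push_cast <;> simp <;> ring
    have e1 : ∑ i, ((p - 1) * (α i * α i) - β i * β i) = (p - 1) * ‖α‖ ^ 2 - ‖β‖ ^ 2 := by
      rw [hα2, hβ2, Finset.mul_sum, Finset.sum_sub_distrib]
    have e2 : ∑ i, p * (α i * β i) = p * (inner ℝ α β : ℝ) := by
      rw [hab, Finset.mul_sum]
    rw [Finset.sum_congr rfl fun i _ => hterm i, Finset.sum_add_distrib, ← Finset.sum_mul,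
      ← Complex.ofReal_sum, ← Complex.ofReal_sum, e1, e2, hSdef]
  have hdiv : ∀ x, (∑ i, fderiv ℝ (fun y => (‖gradh y‖ ^ (p - 2) : ℝ) • gradh y i) x
      (EuclideanSpace.single i 1))
      = ((R ^ (p - 2) : ℝ) : ℂ) * Complex.exp (Lmap x) * S := by
    intro x
    rw [Finset.sum_congr rfl fun i _ => hderiv x i, ← hsumρσ, Finset.mul_sum]
    apply Finset.sum_congr rfl
    intro i _
    ring
  have hC : (((R ^ (p - 2) : ℝ) : ℂ)) ≠ 0 := by
    simp only [ne_eq, Complex.ofReal_eq_zero]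
    exact (Real.rpow_pos_of_pos hRpos _).ne'
  constructor
  · intro hAll
    have h0 := hAll 0
    rw [hdiv 0] at h0
    have hS0 : S = 0 := by
      rcases mul_eq_zero.mp h0 with h1 | h1
      · rcases mul_eq_zero.mp h1 with h2 | h2
        · exact absurd h2 hC
        · exact absurd h2 (Complex.exp_ne_zero _)
      · exact h1
    rw [hSdef] at hS0
    have : (p - 1) * ‖α‖ ^ 2 - ‖β‖ ^ 2 = 0 ∧ p * (inner ℝ α β : ℝ) = 0 := by
      simpa only [Complex.ext_iff, Complex.add_re, Complex.ofReal_re, Complex.mul_re,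
        Complex.I_re, Complex.I_im, Complex.ofReal_im, Complex.add_im, Complex.mul_im,
        Complex.zero_re, Complex.zero_im, mul_zero, mul_one, zero_mul, sub_zero,
        zero_add, add_zero, zero_sub, neg_eq_zero] using hS0
    refine ⟨by linarith [this.1], ?_⟩
    have hpne : p ≠ 0 := by linarith
    exact (mul_eq_zero.mp this.2).resolve_left hpne
  · rintro ⟨h1, h2⟩ x
    have hS0 : S = 0 := by
      rw [hSdef, h2]
      have : (p - 1) * ‖α‖ ^ 2 - ‖β‖ ^ 2 = 0 := by linarith
      rw [this]
      simp
    rw [hdiv x, hS0, mul_zero]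
end

section
/- Let $1 < p < \infty$, let $n \geq 2$, and define for $x = (x_1, \dots, x_n)$ in the upper half space the function $h(x) = e^{-x_n} a(x_1)$, where $a : \mathbb{R} \to \mathbb{R}$ is a $C^2$ function satisfying the ODE $a''(x_1) + V(a(x_1), a'(x_1))\, a(x_1) = 0$ with $V(a, a') = \frac{(2p-3)(a')^2 + (p-1)a^2}{(p-1)(a')^2 + a^2}$ wherever $(a(x_1), a'(x_1)) \neq (0,0)$. Then $h$ satisfies $\mathrm{div}(|\nabla h|^{p-2}\nabla h) = 0$ at every point of $\{x_n > 0\}$ where $\nabla h \neq 0$. -/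
set_option maxHeartbeats 2000000


/-- Wolff's real-valued `p`-harmonic functions: if `a : ℝ → ℝ` is `C²` and satisfies
`a'' + V(a,a') a = 0` with `V(a,a') = ((2p-3)(a')² + (p-1)a²)/((p-1)(a')² + a²)`
wherever `(a, a') ≠ (0,0)`, then `h(x) = e^{-x_n} a(x_1)` satisfies the `p`-Laplace
equation `div(|∇h|^{p-2}∇h) = 0` pointwise at every point of the upper half space
where `∇h ≠ 0`. -/
theorem wolff_pHarmonic (n : ℕ) (hn : 2 ≤ n) (p : ℝ) (hp : 1 < p)
    (a : ℝ → ℝ) (ha : ContDiff ℝ 2 a)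
    (hODE : ∀ t : ℝ, (a t, deriv a t) ≠ (0, 0) →
      deriv (deriv a) t +
        (((2 * p - 3) * (deriv a t) ^ 2 + (p - 1) * (a t) ^ 2) /
          ((p - 1) * (deriv a t) ^ 2 + (a t) ^ 2)) * a t = 0)
    (h : EuclideanSpace ℝ (Fin n) → ℝ)
    (hh : ∀ x, h x = Real.exp (-(x ⟨n - 1, by omega⟩)) * a (x ⟨0, by omega⟩)) :
    ∀ x : EuclideanSpace ℝ (Fin n), 0 < x ⟨n - 1, by omega⟩ → gradient h x ≠ 0 →
      ∑ i, fderiv ℝ (fun y => (‖gradient h y‖ ^ (p - 2) : ℝ) * gradient h y i) x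
          (EuclideanSpace.single i 1) = 0 := by
  have ha1 : Differentiable ℝ a := ha.differentiable (by norm_num)
  have ha2 : Differentiable ℝ (deriv a) := by
    have := (contDiff_succ_iff_deriv.mp (show ContDiff ℝ (1+1) a by norm_num; exact ha)).2.2
    exact this.differentiable (by norm_num)
  set I : Fin n := ⟨0, by omega⟩ with hIdef
  set J : Fin n := ⟨n - 1, by omega⟩ with hJdef
  have hIJ : I ≠ J := by
    simp only [hIdef, hJdef, Fin.mk.injEq, Ne]
    omega
  set g : EuclideanSpace ℝ (Fin n) → EuclideanSpace ℝ (Fin n) := fun y =>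
    (Real.exp (-(y J)) * deriv a (y I)) • EuclideanSpace.single I (1:ℝ) +
      (-(Real.exp (-(y J)) * a (y I))) • EuclideanSpace.single J (1:ℝ) with hgdef
  -- gradient computation
  have hgrad : ∀ y, HasGradientAt h (g y) y := by
    intro y
    have hprojJ : HasFDerivAt (fun z : EuclideanSpace ℝ (Fin n) => z J)
        (EuclideanSpace.proj J : EuclideanSpace ℝ (Fin n) →L[ℝ] ℝ) y :=
      (EuclideanSpace.proj (𝕜 := ℝ) J).hasFDerivAt
    have hprojI : HasFDerivAt (fun z : EuclideanSpace ℝ (Fin n) => z I)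
        (EuclideanSpace.proj I : EuclideanSpace ℝ (Fin n) →L[ℝ] ℝ) y :=
      (EuclideanSpace.proj (𝕜 := ℝ) I).hasFDerivAt
    have hpJ : HasFDerivAt (fun z : EuclideanSpace ℝ (Fin n) => -(z J))
        (-(EuclideanSpace.proj J : EuclideanSpace ℝ (Fin n) →L[ℝ] ℝ)) y :=
      hprojJ.neg
    have hE : HasFDerivAt (fun z : EuclideanSpace ℝ (Fin n) => Real.exp (-(z J)))
        (Real.exp (-(y J)) • -(EuclideanSpace.proj J : EuclideanSpace ℝ (Fin n) →L[ℝ] ℝ)) y :=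
      by have := (Real.hasDerivAt_exp (-(y J))).comp_hasFDerivAt y hpJ; exact this
    have hA : HasFDerivAt (fun z : EuclideanSpace ℝ (Fin n) => a (z I))
        (deriv a (y I) • (EuclideanSpace.proj I : EuclideanSpace ℝ (Fin n) →L[ℝ] ℝ)) y :=
      ((ha1 (y I)).hasDerivAt).comp_hasFDerivAt y hprojI
    have hmul := hE.mul hA
    rw [hasGradientAt_iff_hasFDerivAt]
    have heq : (InnerProductSpace.toDual ℝ (EuclideanSpace ℝ (Fin n))) (g y) =
        Real.exp (-(y J)) • (deriv a (y I) • (EuclideanSpace.proj I : EuclideanSpace ℝ (Fin n) →L[ℝ] ℝ)) +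
          a (y I) • (Real.exp (-(y J)) • -(EuclideanSpace.proj J : EuclideanSpace ℝ (Fin n) →L[ℝ] ℝ)) := by
      apply ContinuousLinearMap.ext
      intro v
      simp [hgdef, inner_add_left, real_inner_smul_left, EuclideanSpace.inner_single_left]
      ring
    rw [heq]
    have hfun : h = fun z : EuclideanSpace ℝ (Fin n) => Real.exp (-(z J)) * a (z I) := funext hh
    rw [hfun]
    exact hmul
  have hgradfun : ∀ y, gradient h y = g y := fun y => (hgrad y).gradient
  -- components
  have hcomp : ∀ (y : EuclideanSpace ℝ (Fin n)) (i : Fin n), g y i =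
      (if i = I then Real.exp (-(y J)) * deriv a (y I) else 0) +
        (if i = J then -(Real.exp (-(y J)) * a (y I)) else 0) := by
    intro y i
    simp only [hgdef, PiLp.add_apply, PiLp.smul_apply, EuclideanSpace.single_apply,
      smul_eq_mul, mul_ite, mul_one, mul_zero]
  -- norm
  have hnorm : ∀ y : EuclideanSpace ℝ (Fin n), ‖g y‖ =
      Real.exp (-(y J)) * Real.sqrt ((deriv a (y I))^2 + (a (y I))^2) := by
    intro y
    rw [EuclideanSpace.norm_eq]
    have hterm : ∀ i : Fin n, ‖g y i‖^2 =
        (if i = I then (Real.exp (-(y J)) * deriv a (y I))^2 else 0) +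
          (if i = J then (Real.exp (-(y J)) * a (y I))^2 else 0) := by
      intro i
      rw [hcomp y i]
      rcases eq_or_ne i I with h1 | h1
      · subst h1
        rw [if_pos rfl, if_pos rfl, if_neg hIJ, if_neg hIJ, add_zero, add_zero,
          Real.norm_eq_abs, sq_abs]
      · rw [if_neg h1, if_neg h1, zero_add, zero_add]
        rcases eq_or_ne i J with h2 | h2
        · subst h2
          rw [if_pos rfl, if_pos rfl, Real.norm_eq_abs, sq_abs, neg_sq]
        · rw [if_neg h2, if_neg h2, norm_zero]
          norm_num
    rw [Finset.sum_congr rfl (fun i _ => hterm i), Finset.sum_add_distrib,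
      Finset.sum_ite_eq' Finset.univ I, Finset.sum_ite_eq' Finset.univ J]
    simp only [Finset.mem_univ, if_true]
    rw [show (Real.exp (-(y J)) * deriv a (y I))^2 + (Real.exp (-(y J)) * a (y I))^2
        = (Real.exp (-(y J)))^2 * ((deriv a (y I))^2 + (a (y I))^2) by ring,
      Real.sqrt_mul (sq_nonneg _), Real.sqrt_sq (Real.exp_nonneg _)]
  -- now the main argument
  intro x hxpos hgx
  set t0 : ℝ := x I with ht0def
  have hpair : (a t0, deriv a t0) ≠ (0, 0) := by
    intro hc
    apply hgx
    rw [hgradfun]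
    have h1 : a t0 = 0 := by simpa using congrArg Prod.fst hc
    have h2 : deriv a t0 = 0 := by simpa using congrArg Prod.snd hc
    simp [hgdef, ← ht0def, h1, h2]
  have hb0s0 : a t0 ≠ 0 ∨ deriv a t0 ≠ 0 := by
    by_contra hc
    push_neg at hc
    exact hpair (by simp [hc.1, hc.2])
  have hqpos : 0 < (deriv a t0)^2 + (a t0)^2 := by
    rcases hb0s0 with h1 | h1
    · have : 0 < (a t0)^2 := by positivity
      nlinarith [sq_nonneg (deriv a t0)]
    · have : 0 < (deriv a t0)^2 := by positivity
      nlinarith [sq_nonneg (a t0)]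
  have hDpos : 0 < (p - 1) * (deriv a t0)^2 + (a t0)^2 := by
    rcases hb0s0 with h1 | h1
    · have : 0 < (a t0)^2 := by positivity
      nlinarith [sq_nonneg (deriv a t0), hp]
    · have : 0 < (deriv a t0)^2 := by positivity
      nlinarith [sq_nonneg (a t0), hp]
  -- the pointwise identity for the flux components
  have hF : ∀ (i : Fin n) (y : EuclideanSpace ℝ (Fin n)),
      ‖gradient h y‖ ^ (p - 2) * gradient h y i =
        (if i = I then Real.exp ((1 - p) * y J) *
            (((deriv a (y I))^2 + (a (y I))^2) ^ ((p-2)/2) * deriv a (y I)) else 0) +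
          (if i = J then -(Real.exp ((1 - p) * y J) *
            (((deriv a (y I))^2 + (a (y I))^2) ^ ((p-2)/2) * a (y I))) else 0) := by
    intro i y
    rw [hgradfun, hnorm y, hcomp y i]
    rcases eq_or_ne ((deriv a (y I))^2 + (a (y I))^2) 0 with hq0 | hq0
    · have hs : deriv a (y I) = 0 := by nlinarith [sq_nonneg (deriv a (y I)), sq_nonneg (a (y I))]
      have hb : a (y I) = 0 := by nlinarith [sq_nonneg (deriv a (y I)), sq_nonneg (a (y I))]
      simp [hs, hb]
    · have hqpos' : 0 < (deriv a (y I))^2 + (a (y I))^2 :=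
        lt_of_le_of_ne (by positivity) (Ne.symm hq0)
      have hA : (Real.exp (-(y J)) * Real.sqrt ((deriv a (y I))^2 + (a (y I))^2)) ^ (p - 2)
          = Real.exp ((p - 2) * -(y J)) * (((deriv a (y I))^2 + (a (y I))^2) ^ ((p-2)/2)) := by
        rw [Real.mul_rpow (Real.exp_nonneg _) (Real.sqrt_nonneg _), ← Real.exp_mul,
          Real.sqrt_eq_rpow, ← Real.rpow_mul hqpos'.le]
        ring_nf
      rw [hA]
      rcases eq_or_ne i I with h1 | h1
      · subst h1
        rw [if_pos rfl, if_pos rfl, if_neg hIJ, if_neg hIJ, add_zero, add_zero,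
          show (1 - p) * (y J) = (p - 2) * -(y J) + -(y J) by ring, Real.exp_add]
        ring
      · rw [if_neg h1, if_neg h1, zero_add, zero_add]
        rcases eq_or_ne i J with h2 | h2
        · subst h2
          rw [if_pos rfl, if_pos rfl,
            show (1 - p) * (y J) = (p - 2) * -(y J) + -(y J) by ring, Real.exp_add]
          ring
        · rw [if_neg h2, if_neg h2, mul_zero]
  -- derivatives of the coefficient functions at t0
  have hprojJx : HasFDerivAt (fun z : EuclideanSpace ℝ (Fin n) => z J)
      (EuclideanSpace.proj J : EuclideanSpace ℝ (Fin n) →L[ℝ] ℝ) x :=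
    (EuclideanSpace.proj (𝕜 := ℝ) J).hasFDerivAt
  have hprojIx : HasFDerivAt (fun z : EuclideanSpace ℝ (Fin n) => z I)
      (EuclideanSpace.proj I : EuclideanSpace ℝ (Fin n) →L[ℝ] ℝ) x :=
    (EuclideanSpace.proj (𝕜 := ℝ) I).hasFDerivAt
  have hEx : HasFDerivAt (fun y : EuclideanSpace ℝ (Fin n) => Real.exp ((1 - p) * y J))
      (Real.exp ((1 - p) * x J) • ((1 - p) • (EuclideanSpace.proj J : EuclideanSpace ℝ (Fin n) →L[ℝ] ℝ))) x :=
    by have := (Real.hasDerivAt_exp ((1 - p) * x J)).comp_hasFDerivAt x (hprojJx.const_mul (1 - p)); exact this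
  have hq' : HasDerivAt (fun t => (deriv a t)^2 + (a t)^2)
      (2 * deriv a t0 * deriv (deriv a) t0 + 2 * a t0 * deriv a t0) t0 := by
    have h1 := ((ha2 t0).hasDerivAt).fun_pow 2
    have h2 := ((ha1 t0).hasDerivAt).fun_pow 2
    refine (h1.fun_add h2).congr_deriv ?_
    norm_num
  have hrp : HasDerivAt (fun t : ℝ => ((deriv a t)^2 + (a t)^2) ^ ((p-2)/2))
      (((p-2)/2) * ((deriv a t0)^2 + (a t0)^2) ^ ((p-2)/2 - 1) *
        (2 * deriv a t0 * deriv (deriv a) t0 + 2 * a t0 * deriv a t0)) t0 := by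
    convert hq'.rpow_const (p := (p-2)/2) (Or.inl hqpos.ne') using 1
    ring
  have hΦ : HasDerivAt (fun t : ℝ => ((deriv a t)^2 + (a t)^2) ^ ((p-2)/2) * deriv a t)
      ((((p-2)/2) * ((deriv a t0)^2 + (a t0)^2) ^ ((p-2)/2 - 1) *
        (2 * deriv a t0 * deriv (deriv a) t0 + 2 * a t0 * deriv a t0)) * deriv a t0 +
        ((deriv a t0)^2 + (a t0)^2) ^ ((p-2)/2) * deriv (deriv a) t0) t0 :=
    hrp.mul (ha2 t0).hasDerivAt
  have hΨ : HasDerivAt (fun t : ℝ => ((deriv a t)^2 + (a t)^2) ^ ((p-2)/2) * a t)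
      ((((p-2)/2) * ((deriv a t0)^2 + (a t0)^2) ^ ((p-2)/2 - 1) *
        (2 * deriv a t0 * deriv (deriv a) t0 + 2 * a t0 * deriv a t0)) * a t0 +
        ((deriv a t0)^2 + (a t0)^2) ^ ((p-2)/2) * deriv a t0) t0 :=
    hrp.mul (ha1 t0).hasDerivAt
  have hΦc : HasFDerivAt (fun y : EuclideanSpace ℝ (Fin n) =>
      ((deriv a (y I))^2 + (a (y I))^2) ^ ((p-2)/2) * deriv a (y I))
      (((((p-2)/2) * ((deriv a t0)^2 + (a t0)^2) ^ ((p-2)/2 - 1) *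
        (2 * deriv a t0 * deriv (deriv a) t0 + 2 * a t0 * deriv a t0)) * deriv a t0 +
        ((deriv a t0)^2 + (a t0)^2) ^ ((p-2)/2) * deriv (deriv a) t0) •
        (EuclideanSpace.proj I : EuclideanSpace ℝ (Fin n) →L[ℝ] ℝ)) x :=
    by have := hΦ.comp_hasFDerivAt x hprojIx; exact this
  have hΨc : HasFDerivAt (fun y : EuclideanSpace ℝ (Fin n) =>
      ((deriv a (y I))^2 + (a (y I))^2) ^ ((p-2)/2) * a (y I))
      (((((p-2)/2) * ((deriv a t0)^2 + (a t0)^2) ^ ((p-2)/2 - 1) *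
        (2 * deriv a t0 * deriv (deriv a) t0 + 2 * a t0 * deriv a t0)) * a t0 +
        ((deriv a t0)^2 + (a t0)^2) ^ ((p-2)/2) * deriv a t0) •
        (EuclideanSpace.proj I : EuclideanSpace ℝ (Fin n) →L[ℝ] ℝ)) x :=
    by have := hΨ.comp_hasFDerivAt x hprojIx; exact this
  have hFI := hEx.fun_mul hΦc
  have hFJ := (hEx.fun_mul hΨc).fun_neg
  -- value of each summand
  have hval : ∀ i : Fin n,
      fderiv ℝ (fun y => (‖gradient h y‖ ^ (p - 2) : ℝ) * gradient h y i) x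
          (EuclideanSpace.single i 1) =
        (if i = I then Real.exp ((1 - p) * x J) *
            ((((p-2)/2) * ((deriv a t0)^2 + (a t0)^2) ^ ((p-2)/2 - 1) *
              (2 * deriv a t0 * deriv (deriv a) t0 + 2 * a t0 * deriv a t0)) * deriv a t0 +
              ((deriv a t0)^2 + (a t0)^2) ^ ((p-2)/2) * deriv (deriv a) t0) else 0) +
          (if i = J then (p - 1) * Real.exp ((1 - p) * x J) *
            (((deriv a t0)^2 + (a t0)^2) ^ ((p-2)/2) * a t0) else 0) := by
    intro i
    rcases eq_or_ne i I with h1 | h1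
    · subst h1
      rw [if_pos rfl, if_neg hIJ, add_zero]
      have hfun : (fun y => (‖gradient h y‖ ^ (p - 2) : ℝ) * gradient h y I) =
          (fun y : EuclideanSpace ℝ (Fin n) => Real.exp ((1 - p) * y J) *
            (((deriv a (y I))^2 + (a (y I))^2) ^ ((p-2)/2) * deriv a (y I))) := by
        funext y
        rw [hF I y, if_pos rfl, if_neg hIJ, add_zero]
      rw [hfun, hFI.fderiv]
      simp only [ContinuousLinearMap.add_apply, ContinuousLinearMap.smul_apply,
        PiLp.proj_apply, EuclideanSpace.single_apply, smul_eq_mul]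
      rw [if_pos trivial, if_neg (Ne.symm hIJ)]
      ring
    · rw [if_neg h1]
      rcases eq_or_ne i J with h2 | h2
      · subst h2
        rw [if_pos rfl, zero_add]
        have hfun : (fun y => (‖gradient h y‖ ^ (p - 2) : ℝ) * gradient h y J) =
            (fun y : EuclideanSpace ℝ (Fin n) => -(Real.exp ((1 - p) * y J) *
              (((deriv a (y I))^2 + (a (y I))^2) ^ ((p-2)/2) * a (y I)))) := by
          funext y
          rw [hF J y, if_neg (Ne.symm hIJ), if_pos rfl, zero_add]
        rw [hfun, hFJ.fderiv]
        simp only [ContinuousLinearMap.neg_apply, ContinuousLinearMap.add_apply,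
          ContinuousLinearMap.smul_apply, PiLp.proj_apply,
          EuclideanSpace.single_apply, smul_eq_mul]
        rw [if_pos trivial, if_neg hIJ]
        ring
      · rw [if_neg h2, add_zero]
        have hfun : (fun y => (‖gradient h y‖ ^ (p - 2) : ℝ) * gradient h y i) =
            (fun _ : EuclideanSpace ℝ (Fin n) => (0:ℝ)) := by
          funext y
          rw [hF i y, if_neg h1, if_neg h2, add_zero]
        rw [hfun, fderiv_fun_const]
        simp
  rw [Finset.sum_congr rfl (fun i _ => hval i), Finset.sum_add_distrib,
    Finset.sum_ite_eq' Finset.univ I, Finset.sum_ite_eq' Finset.univ J]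
  simp only [Finset.mem_univ, if_true]
  -- final algebra using the ODE
  have hQ : ((deriv a t0)^2 + (a t0)^2) ^ ((p-2)/2) =
      ((deriv a t0)^2 + (a t0)^2) ^ ((p-2)/2 - 1) * ((deriv a t0)^2 + (a t0)^2) := by
    rw [← Real.rpow_add_one hqpos.ne']
    ring_nf
  have hkey : ((p - 1) * (deriv a t0)^2 + (a t0)^2) * deriv (deriv a) t0 +
      ((2 * p - 3) * (deriv a t0)^2 + (p - 1) * (a t0)^2) * a t0 = 0 := by
    have h0 := hODE t0 hpair
    have hD2 : deriv a t0 ^ 2 * (p - 1) + a t0 ^ 2 ≠ 0 := (by linarith [hDpos] : (0:ℝ) < _).ne'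
    field_simp [hD2] at h0
    linarith [h0]
  rw [hQ]
  linear_combination (Real.exp ((1 - p) * x J) *
    (((deriv a t0)^2 + (a t0)^2) ^ ((p-2)/2 - 1))) * hkey
end
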